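/- arXiv:1710.08820 — 7 statements merged into one kernel-verified Lean document; each statement's English description precedes it below -/
import Mathlib

section
/- Let T : {0,1}* → {0,1}* be a non-erasing binary morphism. If T(01) < T(1) in the lexicographic order (with 0 < 1), then T is order-preserving on finite words: for all finite binary words u, v with u ≤ v lexicographically, T(u) ≤ T(v) lexicographically. -/
/-- Apply a binary morphism to a finite word. -/
def applyM (T : Bool → List Bool) (w : List Bool) : List Bool := (w.map T).flatten

/-- Strict lexicographic order on finite binary words (false < true). -/
def LexLt (u v : List Bool) : Prop := List.Lex (· < ·) u v

/-- Lexicographic order: u ≤ v iff u is a prefix of v or they differ with a smaller letter. -/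
def LexLe (u v : List Bool) : Prop := List.Lex (· < ·) u v ∨ u = v

/-- Image of an infinite word under a morphism (letterwise, concatenated). -/
def applyInf (T : Bool → List Bool) (u : ℕ → Bool) : ℕ → Bool :=
  fun n => (applyM T ((List.range (n + 1)).map u)).getD n false

/-- Strict lexicographic order on infinite binary words (false < true). -/
def InfLt (u v : ℕ → Bool) : Prop := ∃ n, (∀ i < n, u i = v i) ∧ u n < v n

/-- n-fold concatenation power of a word. -/
def wpow {α : Type*} (x : List α) (n : ℕ) : List α := (List.replicate n x).flatten

/-- A word is primitive if it is not a power uⁿ with n ≥ 2. -/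
def PrimitiveW {α : Type*} (x : List α) : Prop := ∀ (u : List α) (n : ℕ), 2 ≤ n → x ≠ wpow u n

/-- A binary morphism is periodic if T(0), T(1) are powers of a common word. -/
def PeriodicM (T : Bool → List Bool) : Prop :=
  ∃ (t : List Bool) (i j : ℕ), T false = wpow t i ∧ T true = wpow t j

/-- The i-th shift of an infinite word. -/
def shiftW {α : Type*} (ω : ℕ → α) (i : ℕ) : ℕ → α := fun n => ω (i + n)

/-- The word w occurs in ω at position i. -/
def OccursAt {α : Type*} (ω : ℕ → α) (w : List α) (i : ℕ) : Prop :=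
  ∀ k < w.length, w[k]? = some (ω (i + k))

/-- w is a factor of ω. -/
def IsFactor {α : Type*} (ω : ℕ → α) (w : List α) : Prop := ∃ i, OccursAt ω w i

/-- Occurrences at i and i' of length-n factors induce the same permutation:
the relative lexicographic order of the shifts starting inside the occurrences agree. -/
def SamePermAt (ω : ℕ → Bool) (n i i' : ℕ) : Prop :=
  ∀ k < n, ∀ l < n,
    (InfLt (shiftW ω (i + k)) (shiftW ω (i + l)) ↔ InfLt (shiftW ω (i' + k)) (shiftW ω (i' + l)))

/-- Two factors of ω have the same permutation: some occurrences induce equal patterns. -/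
def SamePerm (ω : ℕ → Bool) (u v : List Bool) : Prop :=
  ∃ i i', OccursAt ω u i ∧ OccursAt ω v i' ∧ u.length = v.length ∧
    SamePermAt ω u.length i i'

/-- w is a right special factor of ω. -/
def RightSpecial (ω : ℕ → Bool) (w : List Bool) : Prop :=
  IsFactor ω (w ++ [false]) ∧ IsFactor ω (w ++ [true])

/-- w is a left special factor of ω. -/
def LeftSpecial (ω : ℕ → Bool) (w : List Bool) : Prop :=
  IsFactor ω (false :: w) ∧ IsFactor ω (true :: w)

/-- An infinite word is aperiodic: no two distinct shifts are equal. -/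
def AperiodicW {α : Type*} (ω : ℕ → α) : Prop := ∀ i j : ℕ, i ≠ j → shiftW ω i ≠ shiftW ω j

/-- A finite word has period q. -/
def HasPeriod {α : Type*} (w : List α) (q : ℕ) : Prop :=
  ∀ i, i + q < w.length → w[i]? = w[i + q]?

/-- Uniform recurrence: every long enough factor contains every short factor. -/
def UniformlyRecurrent {α : Type*} (s : ℕ → α) : Prop :=
  ∀ ℓ : ℕ, ∃ L : ℕ, ∀ w z : List α, IsFactor s w → w.length = L →
    IsFactor s z → z.length = ℓ → z <:+: w

/-- Not eventually periodic. -/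
def NotEventuallyPeriodic {α : Type*} (s : ℕ → α) : Prop :=
  ¬ ∃ p : ℕ, 1 ≤ p ∧ ∃ N : ℕ, ∀ n ≥ N, s (n + p) = s n

/-- Concatenation of a finite word with an infinite word. -/
def catInf (w : List Bool) (u : ℕ → Bool) : ℕ → Bool :=
  fun n => if h : n < w.length then w.get ⟨n, h⟩ else u (n - w.length)

def Diffw (u v : List Bool) : Prop :=
  ∃ p s t, u = p ++ false :: s ∧ v = p ++ true :: t

lemma lex_mid (p s t : List Bool) :
    List.Lex (· < ·) (p ++ false :: s) (p ++ true :: t) := by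
  induction p with
  | nil => exact List.Lex.rel (by decide)
  | cons h p ih => exact List.Lex.cons ih

lemma diffw_lex {u v : List Bool} (h : Diffw u v) (s' t' : List Bool) :
    List.Lex (· < ·) (u ++ s') (v ++ t') := by
  obtain ⟨p, s, t, hu, hv⟩ := h
  subst hu; subst hv
  simpa [List.append_assoc] using lex_mid p (s ++ s') (t ++ t')

lemma lexle_append_left {s t : List Bool} (w : List Bool) (h : LexLe s t) :
    LexLe (w ++ s) (w ++ t) := by
  rcases h with h | rfl
  · left
    induction w with
    | nil => exact h
    | cons a w ih => exact List.Lex.cons ih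
  · right; rfl

lemma lexle_nil (t : List Bool) : LexLe [] t := by
  cases t with
  | nil => right; rfl
  | cons a t => left; exact List.Lex.nil

lemma wpow_succ {α : Type*} (a : List α) (n : ℕ) :
    wpow a (n + 1) = a ++ wpow a n := by
  simp [wpow, List.replicate_succ]

lemma wpow_add {α : Type*} (a : List α) (m n : ℕ) :
    wpow a (m + n) = wpow a m ++ wpow a n := by
  show (List.replicate (m + n) a).flatten = _
  rw [List.replicate_add, List.flatten_append]; rfl

lemma wpow_comm {α : Type*} (a : List α) (n : ℕ) :
    a ++ wpow a n = wpow a n ++ a := by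
  induction n with
  | zero => simp [wpow]
  | succ n ih =>
    rw [wpow_succ]
    conv_lhs => rw [ih]
    exact (List.append_assoc _ _ _).symm

lemma applyM_cons (T : Bool → List Bool) (h : Bool) (w : List Bool) :
    applyM T (h :: w) = T h ++ applyM T w := by
  simp [applyM]

lemma applyM_nil (T : Bool → List Bool) : applyM T [] = [] := by simp [applyM]

lemma lexle_of_diffw_pref {a x u v : List Bool} (hd : Diffw a x) (w s t : List Bool)
    (hu : u = w ++ (a ++ s)) (hv : v = w ++ (x ++ t)) : LexLe u v := by
  subst hu; subst hv
  exact lexle_append_left w (Or.inl (diffw_lex hd s t))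

lemma key (T : Bool → List Bool) (x : List Bool) (hd : Diffw (T false) x) :
    ∀ (y : List Bool) (i j : ℕ) (t : List Bool),
      T true = wpow (T false) (i + j) ++ x →
      LexLe (T false ++ applyM T y) (wpow (T false) i ++ (x ++ t)) := by
  intro y
  induction y with
  | nil =>
    intro i j t hb
    cases i with
    | zero =>
      left
      simpa [applyM, wpow] using diffw_lex hd [] t
    | succ i =>
      rw [applyM_nil, List.append_nil, wpow_succ, List.append_assoc]
      simpa using lexle_append_left (T false) (lexle_nil (wpow (T false) i ++ (x ++ t)))
  | cons h y ih =>
    intro i j t hb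
    cases h with
    | false =>
      rw [applyM_cons]
      cases i with
      | zero =>
        left
        simpa [wpow] using diffw_lex hd (T false ++ applyM T y) t
      | succ i =>
        rw [wpow_succ, List.append_assoc]
        refine lexle_append_left (T false) (ih i (j + 1) t ?_)
        rw [show i + (j + 1) = i + 1 + j by omega]
        exact hb
    | true =>
      rw [applyM_cons, hb]
      cases i with
      | zero =>
        left
        simpa [wpow, List.append_assoc] using
          diffw_lex hd ((wpow (T false) j ++ x) ++ applyM T y) t
      | succ i =>
        have e' : T false ++ wpow (T false) (i + 1 + j)
            = (wpow (T false) (i + 1) ++ T false) ++ wpow (T false) j := by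
          rw [wpow_add, ← List.append_assoc, wpow_comm]
        refine lexle_of_diffw_pref hd (wpow (T false) (i + 1))
          ((wpow (T false) j ++ x) ++ applyM T y) t ?_ ?_
        · simp only [← List.append_assoc]
          rw [e']
        · rfl

lemma lex_prefix_or_diff {u v : List Bool} (h : List.Lex (· < ·) u v) :
    u <+: v ∨ Diffw u v := by
  induction h with
  | nil => exact Or.inl List.nil_prefix
  | @cons a l1 l2 h ih =>
    rcases ih with ⟨w, hw⟩ | ⟨p, s, t, h1, h2⟩
    · exact Or.inl ⟨w, by simp [← hw]⟩
    · exact Or.inr ⟨a :: p, s, t, by simp [h1], by simp [h2]⟩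
  | @rel a1 l1 a2 l2 hab =>
    have ha : a1 = false ∧ a2 = true := by
      revert hab; cases a1 <;> cases a2 <;> decide
    exact Or.inr ⟨[], l1, l2, by simp [ha.1], by simp [ha.2]⟩

lemma decomp_aux (a : List Bool) (ha : a ≠ []) :
    ∀ n b, b.length ≤ n → Diffw (a ++ b) b →
      ∃ M x, b = wpow a M ++ x ∧ Diffw a x := by
  intro n
  induction n with
  | zero =>
    intro b hlen hdiff
    have hb : b = [] := List.length_eq_zero_iff.mp (Nat.le_zero.mp hlen)
    obtain ⟨p, s, t, _, h2⟩ := hdiff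
    exact absurd (hb ▸ h2) (by simp)
  | succ n ih =>
    intro b hlen hdiff
    obtain ⟨p, s, t, h1, h2⟩ := hdiff
    by_cases hp : p.length < a.length
    · -- a itself has the difference with b
      obtain ⟨k, hk⟩ : ∃ k, a.length - p.length = k + 1 :=
        ⟨a.length - p.length - 1, by omega⟩
      refine ⟨0, b, by simp [wpow], p, s.take k, t, ?_, h2⟩
      have hta : (a ++ b).take a.length = a := List.take_left
      rw [h1] at hta
      rw [List.take_append] at hta
      rw [List.take_of_length_le (by omega), hk, List.take_succ_cons] at hta
      exact hta.symm
    · push_neg at hp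
      -- a is a prefix of p
      have hpa : p.take a.length = a := by
        have hta : (a ++ b).take a.length = a := List.take_left
        rw [h1, List.take_append,
          Nat.sub_eq_zero_of_le hp, List.take_zero, List.append_nil] at hta
        exact hta
      set p' := p.drop a.length with hp'
      have hpsplit : p = a ++ p' := by rw [← hpa, hp', List.take_append_drop]
      have hbd : b = a ++ (p' ++ true :: t) := by
        rw [h2, hpsplit, List.append_assoc]
      have hb1 : b = p' ++ false :: s := by
        have := h1
        rw [hpsplit, List.append_assoc] at this
        exact List.append_cancel_left this
      have hdd : Diffw (a ++ (p' ++ true :: t)) (p' ++ true :: t) := by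
        refine ⟨p', s, t, ?_, rfl⟩
        rw [← hbd, hb1]
      have hlen' : (p' ++ true :: t).length ≤ n := by
        have h1 := congrArg List.length hbd
        simp only [List.length_append, List.length_cons] at h1 ⊢
        have : 1 ≤ a.length := List.length_pos_iff.mpr ha
        omega
      obtain ⟨M, x, hdx, hax⟩ := ih (p' ++ true :: t) hlen' hdd
      exact ⟨M + 1, x, by rw [hbd, hdx, wpow_succ, List.append_assoc], hax⟩

/-- If T is non-erasing and T(01) < T(1), then T is order-preserving
on finite words. -/
theorem stmt0 (T : Bool → List Bool) (hne : ∀ b, T b ≠ [])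
    (h : LexLt (applyM T [false, true]) (T true)) :
    ∀ u v : List Bool, LexLe u v → LexLe (applyM T u) (applyM T v) := by
  intro u v huv
  rcases huv with hlex | rfl
  · have hab : List.Lex (· < ·) (T false ++ T true) (T true) := by
      simpa [applyM, LexLt] using h
    have hdiff : Diffw (T false ++ T true) (T true) := by
      rcases lex_prefix_or_diff hab with hpre | hd
      · exfalso
        have h1 := hpre.length_le
        have h2 : 0 < (T false).length := List.length_pos_iff.mpr (hne false)
        rw [List.length_append] at h1
        omega
      · exact hd
    obtain ⟨M, x, hbx, hax⟩ :=
      decomp_aux (T false) (hne false) (T true).length (T true) le_rfl hdiff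
    induction hlex with
    | nil =>
      rw [applyM_nil, applyM_cons]
      exact lexle_nil _
    | @cons a l1 l2 hl ih =>
      rw [applyM_cons, applyM_cons]
      exact lexle_append_left _ ih
    | @rel a1 l1 a2 l2 hr =>
      have hft : a1 = false ∧ a2 = true := by
        revert hr; cases a1 <;> cases a2 <;> decide
      rw [hft.1, hft.2, applyM_cons, applyM_cons, hbx, List.append_assoc]
      refine key T x hax l1 M 0 (applyM T l2) ?_
      rw [Nat.add_zero]
      exact hbx
  · exact Or.inr rfl
end

section
/- Let T : {0,1}* → {0,1}* be a binary morphism such that T(1) is not a prefix of T(01) and T(01) > T(1) lexicographically. Then T is order-reversing on infinite words: for all infinite binary words u, v with u < v lexicographically, T(u) > T(v). -/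
namespace Stmt1Aux

/-! ### getD helpers -/

lemma getD_app_left {l l' : List Bool} {i : ℕ} (h : i < l.length) :
    (l ++ l').getD i false = l.getD i false := by
  rw [List.getD_eq_getElem _ _ (by rw [List.length_append]; omega),
      List.getD_eq_getElem _ _ h, List.getElem_append_left h]

lemma getD_app_right {l l' : List Bool} {j : ℕ} (h : j < l'.length) :
    (l ++ l').getD (l.length + j) false = l'.getD j false := by
  rw [List.getD_eq_getElem _ _ (by rw [List.length_append]; omega),
      List.getD_eq_getElem _ _ h,
      List.getElem_append_right (by omega)]
  congr 1
  omega

/-! ### lex extraction -/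

lemma lex_extract {a b : List Bool} (h : List.Lex (· < ·) a b) :
    a <+: b ∨ ∃ k, k < a.length ∧ k < b.length ∧
      (∀ i < k, a.getD i false = b.getD i false) ∧
      a.getD k false = false ∧ b.getD k false = true := by
  induction h with
  | nil => exact Or.inl (List.nil_prefix)
  | @cons x l1 l2 h ih =>
    rcases ih with hp | ⟨k, hk1, hk2, hag, ha, hb⟩
    · exact Or.inl (List.cons_prefix_cons.mpr ⟨rfl, hp⟩)
    · refine Or.inr ⟨k + 1, by simpa using hk1, by simpa using hk2, ?_,
        by simpa using ha, by simpa using hb⟩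
      intro i hi
      cases i with
      | zero => rfl
      | succ i => simpa using hag i (by omega)
  | @rel x l1 y l2 hxy =>
    rw [Bool.lt_iff] at hxy
    obtain ⟨rfl, rfl⟩ := hxy
    exact Or.inr ⟨0, by simp, by simp, fun i hi => absurd hi (Nat.not_lt_zero i), rfl, rfl⟩

/-! ### InfLt lemmas -/

lemma infLt_trans {a b c : ℕ → Bool} (h1 : InfLt a b) (h2 : InfLt b c) : InfLt a c := by
  obtain ⟨n, hn, hn'⟩ := h1
  obtain ⟨m, hm, hm'⟩ := h2
  rcases lt_trichotomy n m with h | rfl | h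
  · exact ⟨n, fun i hi => (hn i hi).trans (hm i (hi.trans h)), (hm n h) ▸ hn'⟩
  · exact ⟨n, fun i hi => (hn i hi).trans (hm i hi), lt_trans hn' hm'⟩
  · exact ⟨m, fun i hi => (hn i (hi.trans h)).trans (hm i hi), (hn m h) ▸ hm'⟩

lemma infLt_prepend {a b : ℕ → Bool} (p : ℕ) (hag : ∀ i < p, a i = b i)
    (h : InfLt (shiftW a p) (shiftW b p)) : InfLt a b := by
  obtain ⟨n, h1, h2⟩ := h
  refine ⟨p + n, fun i hi => ?_, h2⟩
  by_cases hip : i < p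
  · exact hag i hip
  · have hie : i = p + (i - p) := by omega
    rw [hie]
    exact h1 (i - p) (by omega)

lemma catInf_mono (w : List Bool) {a b : ℕ → Bool} (h : InfLt a b) :
    InfLt (catInf w a) (catInf w b) := by
  apply infLt_prepend w.length
  · intro i hi
    simp [catInf, hi]
  · have he : ∀ c : ℕ → Bool, shiftW (catInf w c) w.length = c := by
      intro c
      funext j
      show catInf w c (w.length + j) = c j
      simp only [catInf, dif_neg (by omega : ¬ w.length + j < w.length)]
      congr 1
      omega
    rw [he, he]
    exact h


/-! ### applyInf infrastructure -/

section Infra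

variable (T : Bool → List Bool)

def Aw (u : ℕ → Bool) (N : ℕ) : List Bool := applyM T ((List.range N).map u)

lemma applyM_append (a b : List Bool) : applyM T (a ++ b) = applyM T a ++ applyM T b := by
  simp [applyM]

lemma Aw_add (u : ℕ → Bool) (n m : ℕ) :
    Aw T u (n + m) = Aw T u n ++ Aw T (shiftW u n) m := by
  unfold Aw
  rw [List.range_add, List.map_append, applyM_append, List.map_map]
  rfl

lemma Aw_prefix (u : ℕ → Bool) {N M : ℕ} (h : N ≤ M) : Aw T u N <+: Aw T u M := by
  obtain ⟨d, rfl⟩ := Nat.exists_eq_add_of_le h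
  rw [Aw_add]
  exact List.prefix_append _ _

lemma Aw_one (u : ℕ → Bool) : Aw T u 1 = T (u 0) := by
  simp [Aw, applyM, List.range_succ]

variable (hne : ∀ a, T a ≠ [])
include hne

lemma Aw_len (u : ℕ → Bool) (N : ℕ) : N ≤ (Aw T u N).length := by
  induction N with
  | zero => simp
  | succ n ih =>
    rw [show n + 1 = n + 1 from rfl, Aw_add, List.length_append, Aw_one]
    have h1 : 0 < (T (shiftW u n 0)).length := List.length_pos_iff.mpr (hne _)
    omega

lemma eval (u : ℕ → Bool) (N i : ℕ) (hi : i < (Aw T u N).length) :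
    applyInf T u i = (Aw T u N).getD i false := by
  have h1 : i < (Aw T u (i + 1)).length := lt_of_lt_of_le (Nat.lt_succ_self i) (Aw_len T hne u (i + 1))
  have p1 : Aw T u (i + 1) <+: Aw T u (max N (i + 1)) := Aw_prefix T u (le_max_right _ _)
  have p2 : Aw T u N <+: Aw T u (max N (i + 1)) := Aw_prefix T u (le_max_left _ _)
  show (Aw T u (i + 1)).getD i false = (Aw T u N).getD i false
  rw [List.getD_eq_getElem _ _ h1, List.getD_eq_getElem _ _ hi,
      p1.getElem h1, p2.getElem hi]

lemma shift_eval (u : ℕ → Bool) (n j : ℕ) :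
    applyInf T u ((Aw T u n).length + j) = applyInf T (shiftW u n) j := by
  have hlen : (Aw T u n).length + j < (Aw T u (n + (j + 1))).length := by
    rw [Aw_add, List.length_append]
    have := Aw_len T hne (shiftW u n) (j + 1)
    omega
  have hj : j < (Aw T (shiftW u n) (j + 1)).length :=
    lt_of_lt_of_le (Nat.lt_succ_self j) (Aw_len T hne _ _)
  rw [eval T hne u (n + (j + 1)) _ hlen, eval T hne (shiftW u n) (j + 1) j hj, Aw_add,
      getD_app_right hj]

lemma cons_applyInf (u : ℕ → Bool) :
    applyInf T u = catInf (T (u 0)) (applyInf T (shiftW u 1)) := by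
  funext i
  by_cases h : i < (T (u 0)).length
  · have h1 : i < (Aw T u 1).length := by rw [Aw_one]; exact h
    rw [eval T hne u 1 i h1, Aw_one]
    simp only [catInf, h, dif_pos]
    rw [List.getD_eq_getElem _ _ h]
    rfl
  · obtain ⟨j, rfl⟩ : ∃ j, i = (T (u 0)).length + j := ⟨i - (T (u 0)).length, by omega⟩
    have hs := shift_eval T hne u 1 j
    rw [Aw_one] at hs
    rw [hs]
    simp only [catInf, h, dif_neg]
    congr 1
    omega


end Infra

/-! ### Core comparison -/

section Core

variable (T : Bool → List Bool) (k : ℕ)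
variable (hk : k < (T true).length)
variable (hagree : ∀ i < k, (T true).getD i false = (T false ++ T true).getD i false)
variable (hTk : (T true).getD k false = false)
variable (hWk : (T false ++ T true).getD k false = true)

include hk hagree hTk hWk in
lemma core {α β : ℕ → Bool}
    (hα : ∀ i < (T true).length, α i = (T true).getD i false)
    (hβ : ∀ i < (T false ++ T true).length, β i = (T false ++ T true).getD i false) :
    InfLt α β := by
  have hkW : k < (T false ++ T true).length := by rw [List.length_append]; omega
  refine ⟨k, fun i hi => ?_, ?_⟩
  · rw [hα i (hi.trans hk), hβ i (by rw [List.length_append]; omega), hagree i hi]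
  · rw [hα k hk, hβ k hkW, hTk, hWk]
    decide

variable (hne : ∀ a, T a ≠ [])

include hne in
lemma halpha (x : ℕ → Bool) (hx : x 0 = true) :
    ∀ i < (T true).length, applyInf T x i = (T true).getD i false := by
  intro i hi
  rw [eval T hne x 1 i (by rw [Aw_one, hx]; exact hi), Aw_one, hx]

include hne in
lemma hbeta1 (y : ℕ → Bool) (hy0 : y 0 = false) (hy1 : y 1 = true) :
    ∀ i < (T false ++ T true).length,
      applyInf T y i = (T false ++ T true).getD i false := by
  intro i hi
  rw [List.length_append] at hi
  by_cases h : i < (T false).length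
  · rw [eval T hne y 1 i (by rw [Aw_one, hy0]; exact h), Aw_one, hy0, getD_app_left h]
  · obtain ⟨j, rfl⟩ : ∃ j, i = (T false).length + j := ⟨i - (T false).length, by omega⟩
    have hs := shift_eval T hne y 1 j
    rw [Aw_one, hy0] at hs
    rw [hs, halpha T hne (shiftW y 1) hy1 j (by omega), getD_app_right (by omega)]

lemma hbeta2 {α : ℕ → Bool} (hα : ∀ i < (T true).length, α i = (T true).getD i false) :
    ∀ i < (T false ++ T true).length,
      catInf (T false) α i = (T false ++ T true).getD i false := by
  intro i hi
  rw [List.length_append] at hi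
  by_cases h : i < (T false).length
  · simp only [catInf, h, dif_pos, getD_app_left h]
    rw [List.getD_eq_getElem _ _ h]
    rfl
  · obtain ⟨j, rfl⟩ : ∃ j, i = (T false).length + j := ⟨i - (T false).length, by omega⟩
    have hcond : ¬ ((T false).length + j < (T false).length) := by omega
    simp only [catInf, dif_neg hcond]
    rw [Nat.add_sub_cancel_left, hα j (by omega), getD_app_right (by omega)]

include hne hk hagree hTk hWk in
lemma zeros_case {α : ℕ → Bool}
    (hα : ∀ i < (T true).length, α i = (T true).getD i false) :
    InfLt α (applyInf T (fun _ => false)) := by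
  set β := applyInf T (fun _ => false) with hβdef
  have hT0len : 0 < (T false).length := List.length_pos_iff.mpr (hne false)
  have hper : ∀ j, β ((T false).length + j) = β j := by
    intro j
    have hs := shift_eval T hne (fun _ => false) 1 j
    rw [Aw_one] at hs
    exact hs
  have h0 : ∀ i < (T false).length, β i = (T false).getD i false := by
    intro i hi
    rw [hβdef, eval T hne _ 1 i (by rw [Aw_one]; exact hi), Aw_one]
  have claim : ∀ i, i < k → β i = (T true).getD i false := by
    intro i
    induction i using Nat.strong_induction_on with
    | _ i ih =>
      intro hik
      by_cases h : i < (T false).length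
      · rw [h0 i h, ← getD_app_left h, ← hagree i hik]
      · obtain ⟨j, rfl⟩ : ∃ j, i = (T false).length + j := ⟨i - (T false).length, by omega⟩
        rw [hper j, ih j (by omega) (by omega), hagree _ hik,
            getD_app_right (by omega : j < (T true).length)]
  have hβk : β k = true := by
    by_cases h : k < (T false).length
    · rw [h0 k h, ← getD_app_left h]
      exact hWk
    · obtain ⟨j, rfl⟩ : ∃ k', k = (T false).length + k' := ⟨k - (T false).length, by omega⟩
      rw [hper j, claim j (by omega), ← getD_app_right (by omega : j < (T true).length)]
      exact hWk
  exact ⟨k, fun i hi => by rw [hα i (hi.trans hk), claim i hi],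
    by rw [hα k hk, hTk, hβk]; decide⟩

include hne hk hagree hTk hWk in
lemma Cm {α : ℕ → Bool}
    (hα : ∀ i < (T true).length, α i = (T true).getD i false) :
    ∀ m (y : ℕ → Bool), y 0 = false → y (m + 1) = true → InfLt α (applyInf T y) := by
  intro m
  induction m using Nat.strong_induction_on with
  | _ m ih =>
    intro y hy0 hym
    by_cases h1 : y 1 = true
    · exact core T k hk hagree hTk hWk hα (hbeta1 T hne y hy0 h1)
    · have h1' : y 1 = false := by revert h1; cases y 1 <;> simp
      have hm0 : m ≠ 0 := by
        rintro rfl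
        rw [h1'] at hym
        exact absurd hym (by decide)
      obtain ⟨m', rfl⟩ := Nat.exists_eq_succ_of_ne_zero hm0
      have hy' : shiftW y 1 0 = false := h1'
      have hym' : shiftW y 1 (m' + 1) = true := by
        show y (1 + (m' + 1)) = true
        rw [show 1 + (m' + 1) = m' + 1 + 1 from by omega]
        exact hym
      have IH := ih m' (Nat.lt_succ_self m') (shiftW y 1) hy' hym'
      have step1 : InfLt α (catInf (T false) α) :=
        core T k hk hagree hTk hWk hα (hbeta2 T hα)
      have step2 := catInf_mono (T false) IH
      have heq : applyInf T y = catInf (T false) (applyInf T (shiftW y 1)) := by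
        rw [cons_applyInf T hne y, hy0]
      rw [heq]
      exact infLt_trans step1 step2

include hne hk hagree hTk hWk in
lemma main (x y : ℕ → Bool) (hx : x 0 = true) (hy : y 0 = false) :
    InfLt (applyInf T x) (applyInf T y) := by
  have hα := halpha T hne x hx
  by_cases hall : ∀ i, y i = false
  · have hyz : y = fun _ => false := funext hall
    rw [hyz]
    exact zeros_case T k hk hagree hTk hWk hne hα
  · push_neg at hall
    obtain ⟨m, hm⟩ := hall
    have hm' : y m = true := by revert hm; cases y m <;> simp
    have hm0 : m ≠ 0 := by
      rintro rfl
      rw [hy] at hm'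
      exact absurd hm' (by decide)
    obtain ⟨m', rfl⟩ := Nat.exists_eq_succ_of_ne_zero hm0
    exact Cm T k hk hagree hTk hWk hne hα m' y hy hm'

end Core


theorem stmt1' (T : Bool → List Bool)
    (hnp : ¬ (T true <+: applyM T [false, true]))
    (hgt : List.Lex (· < ·) (T true) (applyM T [false, true])) :
    ∀ u v : ℕ → Bool, InfLt u v → InfLt (applyInf T v) (applyInf T u) := by
  have hW : applyM T [false, true] = T false ++ T true := by simp [applyM]
  rw [hW] at hnp hgt
  have hT1 : T true ≠ [] := by
    rintro h
    rw [h] at hnp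
    exact hnp List.nil_prefix
  have hT0 : T false ≠ [] := by
    rintro h
    rw [h] at hnp
    exact hnp (by simp)
  have hne : ∀ a, T a ≠ [] := by intro a; cases a <;> assumption
  obtain hp | ⟨k, hk1, hk2, hag, hTk, hWk⟩ := lex_extract hgt
  · exact absurd hp hnp
  intro u v hlt
  obtain ⟨n, hagu, huv⟩ := hlt
  have hb : u n = false ∧ v n = true := by revert huv; cases u n <;> cases v n <;> decide
  have hx : (shiftW v n) 0 = true := hb.2
  have hy : (shiftW u n) 0 = false := hb.1
  have hmain := main T k hk1 hag hTk hWk hne (shiftW v n) (shiftW u n) hx hy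
  have hAeq : Aw T u n = Aw T v n := by
    unfold Aw
    congr 1
    apply List.map_congr_left
    intro x hx'
    exact hagu x (List.mem_range.mp hx')
  apply infLt_prepend (Aw T v n).length
  · intro i hi
    rw [eval T hne v n i hi, eval T hne u n i (by rw [hAeq]; exact hi), hAeq]
  · have e1 : shiftW (applyInf T v) (Aw T v n).length = applyInf T (shiftW v n) := by
      funext j
      exact shift_eval T hne v n j
    have e2 : shiftW (applyInf T u) (Aw T v n).length = applyInf T (shiftW u n) := by
      funext j
      show applyInf T u ((Aw T v n).length + j) = _
      rw [← hAeq]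
      exact shift_eval T hne u n j
    rw [e1, e2]
    exact hmain

end Stmt1Aux

/-- If T(1) is not a prefix of T(01) and T(01) > T(1), then T is
order-reversing on infinite words. -/
theorem stmt1 (T : Bool → List Bool)
    (hnp : ¬ (T true <+: applyM T [false, true]))
    (hgt : LexLt (T true) (applyM T [false, true])) :
    ∀ u v : ℕ → Bool, InfLt u v → InfLt (applyInf T v) (applyInf T u) :=
  Stmt1Aux.stmt1' T hnp hgt
end

section
/- Let T : {0,1}* → {0,1}* be a morphism such that T(1) is not a prefix of T(01) and T(01) > T(1). Then there exist words x, y, z and an integer k ≥ 0 such that T(0) = x1y and T(1) = T(0)^k x 0 z. -/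
lemma lex_decomp : ∀ (u v : List Bool), List.Lex (· < ·) u v → ¬ u <+: v →
    ∃ p u' v', u = p ++ false :: u' ∧ v = p ++ true :: v' := by
  intro u v h
  induction h with
  | nil => intro hnp; exact absurd (List.nil_prefix) hnp
  | @cons a l₁ l₂ h ih =>
      intro hnp
      have hnp' : ¬ l₁ <+: l₂ := fun hp => hnp (by simpa using hp)
      obtain ⟨p, u', v', h1, h2⟩ := ih hnp'
      exact ⟨a :: p, u', v', by simp [h1], by simp [h2]⟩
  | @rel a l₁ b l₂ hab =>
      intro _
      have : a = false ∧ b = true := by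
        cases a <;> cases b <;> simp_all (config := {decide := true})
      exact ⟨[], l₁, l₂, by simp [this.1], by simp [this.2]⟩

lemma key_decomp : ∀ (n : ℕ) (p t u' v' : List Bool), p.length = n → t ≠ [] →
    t ++ (p ++ false :: u') = p ++ true :: v' →
    ∃ x y z k, t = x ++ [true] ++ y ∧ p ++ false :: u' = wpow t k ++ x ++ [false] ++ z := by
  intro n
  induction n using Nat.strong_induction_on with
  | _ n ih =>
    intro p t u' v' hn ht heq
    by_cases hlen : p.length < t.length
    · -- p ++ [true] is a prefix of t
      have hpre3 : p ++ [true] <+: t ++ (p ++ false :: u') := by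
        rw [heq]
        exact ⟨v', by simp⟩
      have hlen2 : (p ++ [true]).length ≤ t.length := by simp; omega
      have hpt : p ++ [true] <+: t :=
        List.prefix_of_prefix_length_le hpre3 (List.prefix_append _ _) hlen2
      obtain ⟨y, hy⟩ := hpt
      exact ⟨p, y, u', 0, hy.symm, by simp [wpow]⟩
    · -- t is a prefix of p
      push_neg at hlen
      have hpre : t <+: p := by
        have h1 : t <+: p ++ true :: v' := heq ▸ (List.prefix_append _ _)
        exact List.prefix_of_prefix_length_le h1 (List.prefix_append _ _) hlen
      obtain ⟨q, hq⟩ := hpre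
      subst hq
      have heq' : t ++ (q ++ false :: u') = q ++ true :: v' := by
        apply List.append_cancel_left (as := t)
        have : t ++ ((t ++ q) ++ false :: u') = t ++ (t ++ (q ++ false :: u')) := by
          simp [List.append_assoc]
        rw [← this, heq]
        simp [List.append_assoc]
      have hql : q.length < n := by
        have ht' : 0 < t.length := List.length_pos_iff.mpr ht
        simp at hn
        omega
      obtain ⟨x, y, z, k, hx, hz⟩ := ih q.length hql q t u' v' rfl ht heq'
      refine ⟨x, y, z, k + 1, hx, ?_⟩
      have hw : wpow t (k + 1) = t ++ wpow t k := by
        simp [wpow, List.replicate_succ]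
      calc (t ++ q) ++ false :: u' = t ++ (q ++ false :: u') := by simp
        _ = t ++ (wpow t k ++ x ++ [false] ++ z) := by rw [hz]
        _ = wpow t (k + 1) ++ x ++ [false] ++ z := by rw [hw]; simp [List.append_assoc]

/-- If T(1) is not a prefix of T(01) and T(01) > T(1), then
T(0) = x1y and T(1) = T(0)^k x 0 z for some words x, y, z and k ≥ 0. -/
theorem stmt2 (T : Bool → List Bool)
    (hnp : ¬ (T true <+: applyM T [false, true]))
    (hgt : LexLt (T true) (applyM T [false, true])) :
    ∃ (x y z : List Bool) (k : ℕ),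
      T false = x ++ [true] ++ y ∧
      T true = wpow (T false) k ++ x ++ [false] ++ z := by
  have happ : applyM T [false, true] = T false ++ T true := by simp [applyM]
  rw [happ] at hnp
  have hgt' : List.Lex (· < ·) (T true) (T false ++ T true) := by
    have := hgt; unfold LexLt at this; rwa [happ] at this
  obtain ⟨p, u', v', h1, h2⟩ := lex_decomp _ _ hgt' hnp
  have ht0 : T false ≠ [] := by
    intro h
    rw [h, List.nil_append, h1] at h2
    have := List.append_cancel_left h2
    simp at this
  have heq : T false ++ (p ++ false :: u') = p ++ true :: v' := by rw [← h1]; exact h2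
  obtain ⟨x, y, z, k, hx, hz⟩ := key_decomp p.length p (T false) u' v' rfl ht0 heq
  exact ⟨x, y, z, k, hx, by rw [h1, hz]⟩
end

section
/- Let s be an aperiodic, uniformly recurrent infinite word over a finite alphabet. Then for any integer p ≥ 1 there is a constant K(p) such that every factor of s with period at most p has length at most K(p). -/
lemma hasPeriod_infix {α : Type*} {z w : List α} (hz : z <:+: w) {q : ℕ}
    (h : HasPeriod w q) : HasPeriod z q := by
  obtain ⟨a, b, rfl⟩ := hz
  rw [List.append_assoc] at h
  intro i hi
  have key : ∀ j, j < z.length → (a ++ (z ++ b))[a.length + j]? = z[j]? := by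
    intro j hj
    rw [List.getElem?_append_right (Nat.le_add_right _ _), Nat.add_sub_cancel_left,
      List.getElem?_append_left hj]
  have h1 := key i (lt_of_le_of_lt (Nat.le_add_right i q) hi)
  have h2 := key (i + q) hi
  have := h (a.length + i) (by simp [List.length_append]; omega)
  rw [h1, Nat.add_assoc, h2] at this
  exact this

lemma hasPeriod_take {α : Type*} {w : List α} {q n : ℕ}
    (h : HasPeriod w q) : HasPeriod (w.take n) q := by
  intro i hi
  have hi' : i + q < w.length := lt_of_lt_of_le hi (by
    simpa using (List.length_take n w ▸ min_le_right n w.length).trans le_rfl)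
  have hlt1 : i < n := by
    have := hi; rw [List.length_take] at this; omega
  have hlt2 : i + q < n := by
    have := hi; rw [List.length_take] at this; omega
  rw [List.getElem?_take_of_lt hlt1, List.getElem?_take_of_lt hlt2]
  exact h i hi'

lemma occursAt_take {α : Type*} {s : ℕ → α} {w : List α} {i n : ℕ}
    (h : OccursAt s w i) : OccursAt s (w.take n) i := by
  intro k hk
  have hk' : k < n := by rw [List.length_take] at hk; omega
  have hk'' : k < w.length := by rw [List.length_take] at hk; omega
  rw [List.getElem?_take_of_lt hk']
  exact h k hk''

/-- An aperiodic, uniformly recurrent word has bounded factors of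
period at most p, for every p ≥ 1. -/
theorem stmt8 {α : Type*} [Fintype α] (s : ℕ → α)
    (hap : NotEventuallyPeriodic s) (hur : UniformlyRecurrent s) :
    ∀ p : ℕ, 1 ≤ p → ∃ K : ℕ, ∀ w : List α, IsFactor s w →
      (∃ q : ℕ, 1 ≤ q ∧ q ≤ p ∧ HasPeriod w q) → w.length ≤ K := by
  intro p hp
  have claim : ∀ q : ℕ, ∃ K : ℕ, 1 ≤ q →
      ∀ w : List α, IsFactor s w → HasPeriod w q → w.length ≤ K := by
    intro q
    by_contra hc
    push_neg at hc
    have hq1 : 1 ≤ q := (hc 0).1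
    apply hap
    refine ⟨q, hq1, 0, fun n _ => ?_⟩
    -- build contradiction: show s (n + q) = s n
    obtain ⟨L, hL⟩ := hur (n + q + 1)
    obtain ⟨w, hwf, hwper, hwlen⟩ := (hc (max L (n + q + 1))).2
    -- take the prefix of length L
    obtain ⟨i, hocc⟩ := hwf
    set w' := w.take L with hw'
    have hw'len : w'.length = L := by
      rw [hw', List.length_take]; omega
    have hw'f : IsFactor s w' := ⟨i, occursAt_take hocc⟩
    have hw'per : HasPeriod w' q := hasPeriod_take hwper
    set z := (List.range (n + q + 1)).map s with hz
    have hzlen : z.length = n + q + 1 := by simp [hz]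
    have hzget : ∀ k, k < n + q + 1 → z[k]? = some (s k) := by
      intro k hk
      rw [hz, List.getElem?_map, List.getElem?_range hk]; rfl
    have hzf : IsFactor s z := by
      refine ⟨0, fun k hk => ?_⟩
      rw [hzlen] at hk
      rw [hzget k hk, Nat.zero_add]
    have hinf : z <:+: w' := hL w' z hw'f hw'len hzf hzlen
    have hzper : HasPeriod z q := hasPeriod_infix hinf hw'per
    have := hzper n (by omega)
    rw [hzget n (by omega), hzget (n + q) (by omega)] at this
    exact (Option.some_inj.mp this).symm
  choose Kf hKf using claim
  refine ⟨(Finset.Icc 1 p).sup Kf, fun w hwf ⟨q, hq1, hqp, hper⟩ => ?_⟩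
  exact (hKf q hq1 w hwf hper).trans (Finset.le_sup (Finset.mem_Icc.mpr ⟨hq1, hqp⟩))
end

section
/- Let ω be an infinite aperiodic binary word (no two shifts of ω are equal), and let u, v be distinct factors of ω of the same length n ≥ 2 that have the same permutation (i.e., Perm_ω(u) ∩ Perm_ω(v) ≠ ∅). Then u and v differ only in their last position. -/
lemma infLt_asymm {a b : ℕ → Bool} (h1 : InfLt a b) (h2 : InfLt b a) : False := by
  obtain ⟨m, hm, hm'⟩ := h1
  obtain ⟨r, hr, hr'⟩ := h2
  rcases lt_trichotomy m r with h | h | h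
  · rw [hr m h] at hm'; exact lt_irrefl _ hm'
  · subst h; exact lt_irrefl _ (lt_trans hm' hr')
  · rw [hm r h] at hr'; exact lt_irrefl _ hr'

lemma shift_lt_succ (ω : ℕ → Bool) (hap : AperiodicW ω) (m : ℕ) (h : ω m = false) :
    InfLt (shiftW ω m) (shiftW ω (m + 1)) := by
  have hne : shiftW ω m ≠ shiftW ω (m + 1) := hap m (m + 1) (by omega)
  have hex : ∃ r, ω (m + r) ≠ ω (m + 1 + r) := by
    by_contra hc
    push_neg at hc
    exact hne (funext fun k => hc k)
  classical
  set r := Nat.find hex with hrdef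
  have hr : ω (m + r) ≠ ω (m + 1 + r) := Nat.find_spec hex
  have hmin : ∀ i < r, ω (m + i) = ω (m + 1 + i) := fun i hi => by
    have := Nat.find_min hex hi; simpa using this
  have hall : ∀ i ≤ r, ω (m + i) = false := by
    intro i hi
    induction i with
    | zero => simpa using h
    | succ j ih =>
      have hj : ω (m + j) = false := ih (by omega)
      have h2 := hmin j (by omega)
      rw [hj] at h2
      rw [show m + (j + 1) = m + 1 + j by omega]
      exact h2.symm
  have h1 : ω (m + r) = false := hall r le_rfl
  have h2 : ω (m + 1 + r) = true := by
    cases hb : ω (m + 1 + r) with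
    | true => rfl
    | false => exact absurd (h1.trans hb.symm) hr
  exact ⟨r, fun i hi => hmin i hi, by show ω (m + r) < ω (m + 1 + r); rw [h1, h2]; decide⟩

lemma shift_gt_succ (ω : ℕ → Bool) (hap : AperiodicW ω) (m : ℕ) (h : ω m = true) :
    InfLt (shiftW ω (m + 1)) (shiftW ω m) := by
  have hne : shiftW ω m ≠ shiftW ω (m + 1) := hap m (m + 1) (by omega)
  have hex : ∃ r, ω (m + r) ≠ ω (m + 1 + r) := by
    by_contra hc
    push_neg at hc
    exact hne (funext fun k => hc k)
  classical
  set r := Nat.find hex with hrdef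
  have hr : ω (m + r) ≠ ω (m + 1 + r) := Nat.find_spec hex
  have hmin : ∀ i < r, ω (m + i) = ω (m + 1 + i) := fun i hi => by
    have := Nat.find_min hex hi; simpa using this
  have hall : ∀ i ≤ r, ω (m + i) = true := by
    intro i hi
    induction i with
    | zero => simpa using h
    | succ j ih =>
      have hj : ω (m + j) = true := ih (by omega)
      have h2 := hmin j (by omega)
      rw [hj] at h2
      rw [show m + (j + 1) = m + 1 + j by omega]
      exact h2.symm
  have h1 : ω (m + r) = true := hall r le_rfl
  have h2 : ω (m + 1 + r) = false := by
    cases hb : ω (m + 1 + r) with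
    | false => rfl
    | true => exact absurd (h1.trans hb.symm) hr
  exact ⟨r, fun i hi => (hmin i hi).symm,
    by show ω (m + 1 + r) < ω (m + r); rw [h1, h2]; decide⟩

/-- The letter at position m is determined by the order of shifts m and m+1. -/
lemma letter_eq_of_order (ω : ℕ → Bool) (hap : AperiodicW ω) (m m' : ℕ)
    (h : InfLt (shiftW ω m) (shiftW ω (m + 1)) ↔ InfLt (shiftW ω m') (shiftW ω (m' + 1))) :
    ω m = ω m' := by
  cases hb : ω m with
  | false =>
    cases hb' : ω m' with
    | false => rfl
    | true =>
      have h1 := shift_lt_succ ω hap m hb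
      have h2 := shift_gt_succ ω hap m' hb'
      exact absurd (h.mp h1) (fun hx => infLt_asymm hx h2)
  | true =>
    cases hb' : ω m' with
    | true => rfl
    | false =>
      have h1 := shift_gt_succ ω hap m hb
      have h2 := shift_lt_succ ω hap m' hb'
      exact absurd (h.mpr h2) (fun hx => infLt_asymm hx h1)

/-- Distinct factors of the same length n ≥ 2 of an aperiodic word
having the same permutation differ only in their last position. -/
theorem stmt10 (ω : ℕ → Bool) (hap : AperiodicW ω) (u v : List Bool) (n : ℕ)
    (hn : 2 ≤ n) (hu : u.length = n) (hv : v.length = n) (huv : u ≠ v)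
    (hperm : SamePerm ω u v) :
    u.dropLast = v.dropLast := by
  obtain ⟨i, i', hou, hov, hlen, hsp⟩ := hperm
  rw [hu] at hsp
  apply List.ext_getElem
  · simp [List.length_dropLast, hu, hv]
  intro k h1 h2
  have hk : k < n - 1 := by simpa [List.length_dropLast, hu] using h1
  rw [List.getElem_dropLast, List.getElem_dropLast]
  have hku : u[k]'(by omega) = ω (i + k) := by
    have := hou k (by omega)
    rw [List.getElem?_eq_getElem (by omega : k < u.length)] at this
    exact Option.some.inj this
  have hkv : v[k]'(by omega) = ω (i' + k) := by
    have := hov k (by omega)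
    rw [List.getElem?_eq_getElem (by omega : k < v.length)] at this
    exact Option.some.inj this
  rw [hku, hkv]
  have hspec := hsp k (by omega) (k + 1) (by omega)
  exact letter_eq_of_order ω hap (i + k) (i' + k) (by
    simpa [Nat.add_assoc] using hspec)
end

section
/- Let ω be an infinite aperiodic binary word and suppose u = w0 and v = w1 are factors of ω of length n with the same permutation. Then w is a right special factor of ω (both w0 and w1 occur in ω). Consequently, if ω has exactly one right special factor of length n−1 for all large n, then for n sufficiently large there is at most one pair of distinct factors of length n with the same permutation. -/
lemma inflt_asymm {a b : ℕ → Bool} (h : InfLt a b) : ¬ InfLt b a := by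
  obtain ⟨n, h1, h2⟩ := h
  rintro ⟨m, h3, h4⟩
  rcases lt_trichotomy n m with hnm | rfl | hmn
  · have := h3 n hnm
    rw [Bool.lt_iff] at h2
    rw [h2.1, h2.2] at this
    exact absurd this (by decide)
  · exact absurd h4 (lt_asymm h2)
  · have := h1 m hmn
    rw [Bool.lt_iff] at h4
    rw [h4.1, h4.2] at this
    exact absurd this (by decide)

lemma step_false {ω : ℕ → Bool} (hap : AperiodicW ω) {p : ℕ} (hp : ω p = false) :
    InfLt (shiftW ω p) (shiftW ω (p + 1)) := by
  classical
  have hne : shiftW ω p ≠ shiftW ω (p + 1) := hap p (p + 1) (by omega)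
  have hex : ∃ n, shiftW ω p n ≠ shiftW ω (p + 1) n := by
    by_contra h
    push_neg at h
    exact hne (funext h)
  set n := Nat.find hex with hn
  have hspec : shiftW ω p n ≠ shiftW ω (p + 1) n := Nat.find_spec hex
  have hmin : ∀ i < n, shiftW ω p i = shiftW ω (p + 1) i := by
    intro i hi
    exact not_not.mp (Nat.find_min hex hi)
  have hall : ∀ j ≤ n, ω (p + j) = false := by
    intro j hj
    induction j with
    | zero => simpa using hp
    | succ k ih =>
      have hk := hmin k (by omega)
      simp only [shiftW] at hk
      have e : p + 1 + k = p + (k + 1) := by omega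
      rw [e] at hk
      rw [← hk]
      exact ih (by omega)
  refine ⟨n, hmin, ?_⟩
  have h1 : shiftW ω p n = false := hall n le_rfl
  have h2 : shiftW ω (p + 1) n = true := by
    cases hb : shiftW ω (p + 1) n
    · exact absurd (h1.trans hb.symm) hspec
    · rfl
  rw [h1, h2]
  decide

lemma step_true {ω : ℕ → Bool} (hap : AperiodicW ω) {p : ℕ} (hp : ω p = true) :
    InfLt (shiftW ω (p + 1)) (shiftW ω p) := by
  classical
  have hne : shiftW ω p ≠ shiftW ω (p + 1) := hap p (p + 1) (by omega)
  have hex : ∃ n, shiftW ω p n ≠ shiftW ω (p + 1) n := by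
    by_contra h
    push_neg at h
    exact hne (funext h)
  set n := Nat.find hex with hn
  have hspec : shiftW ω p n ≠ shiftW ω (p + 1) n := Nat.find_spec hex
  have hmin : ∀ i < n, shiftW ω p i = shiftW ω (p + 1) i := by
    intro i hi
    exact not_not.mp (Nat.find_min hex hi)
  have hall : ∀ j ≤ n, ω (p + j) = true := by
    intro j hj
    induction j with
    | zero => simpa using hp
    | succ k ih =>
      have hk := hmin k (by omega)
      simp only [shiftW] at hk
      have e : p + 1 + k = p + (k + 1) := by omega
      rw [e] at hk
      rw [← hk]
      exact ih (by omega)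
  refine ⟨n, fun i hi => (hmin i hi).symm, ?_⟩
  have h1 : shiftW ω p n = true := hall n le_rfl
  have h2 : shiftW ω (p + 1) n = false := by
    cases hb : shiftW ω (p + 1) n
    · rfl
    · exact absurd (h1.trans hb.symm) hspec
  rw [h1, h2]
  decide

lemma shift_lt_iff {ω : ℕ → Bool} (hap : AperiodicW ω) (p : ℕ) :
    InfLt (shiftW ω p) (shiftW ω (p + 1)) ↔ ω p = false := by
  constructor
  · intro h
    cases hb : ω p
    · rfl
    · exact absurd h (inflt_asymm (step_true hap hb))
  · exact fun hb => step_false hap hb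

lemma diff_last {ω : ℕ → Bool} (hap : AperiodicW ω) {u v : List Bool}
    (h : SamePerm ω u v) (hne : u ≠ v) :
    ∃ (w : List Bool) (a b : Bool), u = w ++ [a] ∧ v = w ++ [b] ∧ a ≠ b := by
  classical
  obtain ⟨i, i', hu, hv, hlen, hsp⟩ := h
  have hex : ∃ k : ℕ, u[k]? ≠ v[k]? := by
    by_contra hc
    push_neg at hc
    exact hne (List.ext_getElem? hc)
  set k := Nat.find hex with hkdef
  have hk : u[k]? ≠ v[k]? := Nat.find_spec hex
  have hkmin : ∀ j < k, u[j]? = v[j]? := fun j hj =>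
    not_not.mp (Nat.find_min hex hj)
  have hklt : k < u.length := by
    by_contra hkl
    push_neg at hkl
    apply hk
    rw [List.getElem?_eq_none (by omega), List.getElem?_eq_none (by omega)]
  have hou := hu k hklt
  have hov := hv k (by omega)
  have hωne : ω (i + k) ≠ ω (i' + k) := by
    intro he
    apply hk
    rw [hou, hov, he]
  have hlast : k + 1 = u.length := by
    by_contra hkn
    have hk1 : k + 1 < u.length := by omega
    have hiff := hsp k hklt (k + 1) hk1
    simp only [← Nat.add_assoc] at hiff
    rw [shift_lt_iff hap (i + k), shift_lt_iff hap (i' + k)] at hiff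
    apply hωne
    by_cases hb : ω (i + k) = false
    · rw [hb, hiff.mp hb]
    · have h1 : ω (i + k) = true := by
        cases hx : ω (i + k)
        · exact absurd hx hb
        · rfl
      have h2 : ω (i' + k) = true := by
        cases hx : ω (i' + k)
        · exact absurd (hiff.mpr hx) hb
        · rfl
      rw [h1, h2]
  have hdu : ∃ a, u.drop k = [a] := by
    apply List.length_eq_one_iff.mp
    rw [List.length_drop]
    omega
  have hdv : ∃ b, v.drop k = [b] := by
    apply List.length_eq_one_iff.mp
    rw [List.length_drop]
    omega
  obtain ⟨a, ha⟩ := hdu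
  obtain ⟨b, hb⟩ := hdv
  have htake : u.take k = v.take k := by
    apply List.ext_getElem?
    intro j
    by_cases hj : j < k
    · rw [List.getElem?_take_of_lt hj, List.getElem?_take_of_lt hj, hkmin j hj]
    · push_neg at hj
      rw [List.getElem?_eq_none (by rw [List.length_take]; omega),
        List.getElem?_eq_none (by rw [List.length_take]; omega)]
  set l := u.take k with hl
  have hua : u = l ++ [a] := by rw [hl, ← ha, List.take_append_drop]
  have hvb : v = l ++ [b] := by rw [htake, ← hb, List.take_append_drop]
  refine ⟨l, a, b, hua, hvb, ?_⟩
  intro hab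
  apply hk
  have hlt : l.length = k := by rw [hl, List.length_take]; omega
  rw [hua, hvb, ← hlt, List.getElem?_concat_length, List.getElem?_concat_length, hab]

lemma pair_eq {ω : ℕ → Bool} (hap : AperiodicW ω) {u v : List Bool} {n : ℕ}
    (hlu : u.length = n) (hne : u ≠ v) (hsp : SamePerm ω u v) :
    ∃ w : List Bool, w.length + 1 = n ∧ RightSpecial ω w ∧
      ({u, v} : Set (List Bool)) = {w ++ [false], w ++ [true]} := by
  obtain ⟨w, a, b, hua, hvb, hab⟩ := diff_last hap hsp hne
  have hfu : IsFactor ω u := by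
    obtain ⟨i, _, hu, _⟩ := hsp
    exact ⟨i, hu⟩
  have hfv : IsFactor ω v := by
    obtain ⟨i, i', _, hv, _⟩ := hsp
    exact ⟨i', hv⟩
  have hwl : w.length + 1 = n := by
    rw [← hlu, hua]
    simp
  cases a <;> cases b
  · exact absurd rfl hab
  · refine ⟨w, hwl, ⟨hua ▸ hfu, hvb ▸ hfv⟩, by rw [hua, hvb]⟩
  · refine ⟨w, hwl, ⟨hvb ▸ hfv, hua ▸ hfu⟩, by rw [hua, hvb, Set.pair_comm]⟩
  · exact absurd rfl hab

/-- If w0 and w1 have the same permutation then w is right special;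
consequently, if ω eventually has a unique right special factor of each length,
then for large n there is at most one same-permutation pair of distinct length-n
factors. -/
theorem stmt11 (ω : ℕ → Bool) (hap : AperiodicW ω) :
    (∀ w : List Bool, SamePerm ω (w ++ [false]) (w ++ [true]) → RightSpecial ω w) ∧
    ((∃ N : ℕ, ∀ n ≥ N, ∃! r : List Bool, r.length = n ∧ RightSpecial ω r) →
      ∃ N' : ℕ, ∀ n ≥ N', ∀ u v u' v' : List Bool,
        u.length = n → v.length = n → u'.length = n → v'.length = n →
        u ≠ v → u' ≠ v' → SamePerm ω u v → SamePerm ω u' v' →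
        ({u, v} : Set (List Bool)) = {u', v'}) := by
  constructor
  · rintro w ⟨i, i', hu, hv, _, _⟩
    exact ⟨⟨i, hu⟩, ⟨i', hv⟩⟩
  · rintro ⟨N, hN⟩
    refine ⟨N + 1, fun n hn u v u' v' hlu hlv hlu' hlv' huv huv' hsp hsp' => ?_⟩
    obtain ⟨w, hwl, hwr, hwp⟩ := pair_eq hap hlu huv hsp
    obtain ⟨w', hwl', hwr', hwp'⟩ := pair_eq hap hlu' huv' hsp'
    obtain ⟨r, _, hru⟩ := hN w.length (by omega)
    have h1 : w = r := hru w ⟨rfl, hwr⟩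
    have h2 : w' = r := hru w' ⟨by omega, hwr'⟩
    rw [hwp, hwp', h1, h2]
end

section
/- Let ω be an infinite aperiodic binary word with exactly one right special factor of each length n for all n ≥ N, and suppose that for infinitely many n there exists a pair of distinct length-n factors of ω with the same permutation. Then for every n ≥ 2 there exists such a pair of length-n factors. -/
/-- If ω eventually has a unique right special factor of each
length and same-permutation pairs of distinct equal-length factors exist for
infinitely many lengths, then they exist for every length n ≥ 2. -/
theorem stmt16 (ω : ℕ → Bool) (hap : AperiodicW ω) (N : ℕ)
    (hrs : ∀ n ≥ N, ∃! r : List Bool, r.length = n ∧ RightSpecial ω r)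
    (hinf : ∀ m : ℕ, ∃ n ≥ m, ∃ u v : List Bool,
      u.length = n ∧ v.length = n ∧ u ≠ v ∧ SamePerm ω u v) :
    ∀ n : ℕ, 2 ≤ n → ∃ u v : List Bool,
      u.length = n ∧ v.length = n ∧ u ≠ v ∧ SamePerm ω u v := by
  intro n hn
  obtain ⟨m, hm, u, v, hu, hv, huv, i, i', hoi, hoi', hlen, hperm⟩ := hinf n
  have hul : u.length = m := hu
  have hvl : v.length = m := hv
  have hne : ∃ p : ℕ, u[p]? ≠ v[p]? := by
    by_contra h
    push_neg at h
    exact huv (List.ext_getElem? h)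
  obtain ⟨p, hp⟩ := hne
  have hpm : p < m := by
    by_contra h
    push_neg at h
    exact hp (by rw [List.getElem?_eq_none (by omega), List.getElem?_eq_none (by omega)])
  set a := min p (m - n) with ha
  have han : a + n ≤ m := by omega
  have hap' : p < a + n := by omega
  have hale : a ≤ p := min_le_left _ _
  have hulen : ((u.drop a).take n).length = n := by
    simp [List.length_take, List.length_drop, hul]; omega
  have hvlen : ((v.drop a).take n).length = n := by
    simp [List.length_take, List.length_drop, hvl]; omega
  have hget : ∀ (w : List Bool) (k : ℕ), k < n → ((w.drop a).take n)[k]? = w[a + k]? := by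
    intro w k hk
    rw [List.getElem?_take_of_lt hk, List.getElem?_drop]
  refine ⟨(u.drop a).take n, (v.drop a).take n, hulen, hvlen, ?_, i + a, i' + a, ?_, ?_, ?_, ?_⟩
  · intro heq
    apply hp
    have hpa : p - a < n := by omega
    have e : a + (p - a) = p := by omega
    rw [← e, ← hget u _ hpa, ← hget v _ hpa, heq]
  · intro k hk
    rw [hulen] at hk
    rw [hget u k hk, hoi (a + k) (by omega), Nat.add_assoc]
  · intro k hk
    rw [hvlen] at hk
    rw [hget v k hk, hoi' (a + k) (by omega), Nat.add_assoc]
  · rw [hulen, hvlen]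
  · rw [hulen]
    intro k hk l hl
    have := hperm (a + k) (by omega) (a + l) (by omega)
    simpa [Nat.add_assoc] using this
end
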